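/- Let G be a group, k a field, and τ an automorphism of G of finite order r, extended linearly to a Hopf algebra automorphism of the group algebra k[G]. Then the twisted exponent exp_τ(k[G]) equals the least common multiple over g ∈ G of the orders of the norms N(g) = g·τ(g)·τ²(g)⋯τ^{r-1}(g) (with both sides possibly infinite). Equivalently, a positive integer k satisfies Γ^τ_{kr}(h) = ε(h)·1 for all h ∈ k[G] if and only if N(g)^k = 1 for all g ∈ G. -/

import Mathlib

open scoped TensorProduct

noncomputable section

namespace TwistedExponent

variable (k H : Type*) [CommRing k] [Ring H] [HopfAlgebra k H]

/-- The convolution product of two linear endomorphisms of a bialgebra: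
`f * g = μ ∘ (f ⊗ g) ∘ Δ`. -/
def conv (f g : H →ₗ[k] H) : H →ₗ[k] H :=
  LinearMap.mul' k H ∘ₗ TensorProduct.map f g ∘ₗ Coalgebra.comul

/-- The convolution unit `η ∘ ε`, i.e. `h ↦ ε(h)·1`. -/
def convOne : H →ₗ[k] H := Algebra.linearMap k H ∘ₗ Coalgebra.counit

/-- `gamma T m` is the map `Γ_m = μ^m ∘ (Id ⊗ T ⊗ T² ⊗ ⋯ ⊗ T^{m-1}) ∘ Δ^{m-1}`, expressed as
the convolution product `Id * T * T² * ⋯ * T^{m-1}` (with `gamma T 0` the convolution unit). -/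
def gamma (T : H →ₗ[k] H) : ℕ → (H →ₗ[k] H)
  | 0 => convOne k H
  | (m + 1) => conv k H (gamma T m) (T ^ m)

/-- The inverse of the antipode, given that the antipode is bijective. -/
def antipodeInv (hS : Function.Bijective (HopfAlgebra.antipode (R := k) (A := H))) :
    H →ₗ[k] H :=
  (LinearEquiv.ofBijective (HopfAlgebra.antipode (R := k) (A := H)) hS).symm

/-- The map `S⁻² ∘ τ`. -/
def twist (hS : Function.Bijective (HopfAlgebra.antipode (R := k) (A := H)))
    (τ : H →ₗ[k] H) : H →ₗ[k] H :=
  antipodeInv k H hS ∘ₗ antipodeInv k H hS ∘ₗ τ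

/-- `f : H → H` has exact (finite) order `r`. -/
def HasOrder (τ : H → H) (r : ℕ) : Prop :=
  0 < r ∧ τ^[r] = id ∧ ∀ s : ℕ, 0 < s → s < r → τ^[s] ≠ id

end TwistedExponent

open TwistedExponent

namespace TwistedExponent

/-- The norm of `g ∈ G` with respect to `τ`: `N(g) = g·τ(g)·τ²(g)⋯τ^{r-1}(g)`. -/
def normG {G : Type*} [Monoid G] (τ : G → G) (r : ℕ) (g : G) : G :=
  ((List.range r).map (fun i => τ^[i] g)).prod

/-- `f : G → G` has exact (finite) order `r`. -/
def HasOrderG {G : Type*} (τ : G → G) (r : ℕ) : Prop :=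
  0 < r ∧ τ^[r] = id ∧ ∀ s : ℕ, 0 < s → s < r → τ^[s] ≠ id

end TwistedExponent


namespace TwistedExponent

lemma normG_add {G : Type*} [Monoid G] (τ : G → G) (a b : ℕ) (g : G) :
    normG τ (a + b) g = normG τ a g * normG τ b (τ^[a] g) := by
  have hf : (fun i => τ^[i] g) ∘ (a + ·) = fun i => τ^[i] (τ^[a] g) := by
    funext i
    simp only [Function.comp_apply]
    rw [Nat.add_comm a i, Function.iterate_add_apply]
  simp only [normG, List.range_add, List.map_append, List.prod_append, List.map_map, hf]

lemma normG_mul_left {G : Type*} [Monoid G] (τ : G → G) (r : ℕ) (hτr : τ^[r] = id)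
    (n : ℕ) (g : G) : normG τ (n * r) g = normG τ r g ^ n := by
  induction n with
  | zero => simp [normG]
  | succ n ih =>
      have hid : τ^[n * r] = id := by
        rw [Nat.mul_comm, Function.iterate_mul, hτr]
        exact Function.iterate_id n
      rw [Nat.succ_mul, normG_add, ih, hid, pow_succ]
      rfl

end TwistedExponent

/-- Let `G` be a group, `k` a field, and `τ` an automorphism of `G` of finite
order `r`, extended linearly to a Hopf algebra automorphism of the group algebra `k[G]`.  (The
group algebra is encoded as a Hopf algebra `H` with a monoid homomorphism `ι : G →* H` whose
values are group-like and form a `k`-basis of `H`, and `τH` is the linear extension of `τ`.)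
Then a positive integer `n` satisfies `Γ^τ_{nr}(h) = ε(h)·1` for all `h ∈ k[G]` if and only if
`N(g)^n = 1` for all `g ∈ G`, where `N(g) = g·τ(g)⋯τ^{r-1}(g)`; that is, `exp_τ(k[G])` is the
least common multiple over `g ∈ G` of the orders of the norms `N(g)` (both sides possibly
infinite). -/
theorem stmt1 {k G H : Type*} [Field k] [Group G] [Ring H] [HopfAlgebra k H]
    (hS : Function.Bijective (HopfAlgebra.antipode (R := k) (A := H)))
    (ι : G →* H) (b : Module.Basis G k H) (hb : ∀ g : G, b g = ι g)
    (hgl₁ : ∀ g : G, Coalgebra.comul (R := k) (ι g) = ι g ⊗ₜ[k] ι g)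
    (hgl₂ : ∀ g : G, Coalgebra.counit (R := k) (ι g) = 1)
    (τ : G ≃* G) (r : ℕ) (hr : HasOrderG (⇑τ) r)
    (τH : H ≃ₐc[k] H) (hτH : ∀ g : G, τH (ι g) = ι (τ g)) :
    ∀ n : ℕ, 0 < n →
      (gamma k H (twist k H hS (τH : H →ₗ[k] H)) (n * r) = convOne k H ↔
        ∀ g : G, normG (⇑τ) r g ^ n = 1) := by
  classical
  have hinj : Function.Injective ι := fun g g' h => b.injective (by rw [hb, hb]; exact h)
  -- antipode on group-likes
  have hSg : ∀ g : G, HopfAlgebra.antipode (R := k) (A := H) (ι g) = ι g⁻¹ := by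
    intro g
    have h1 : HopfAlgebra.antipode (R := k) (A := H) (ι g) * ι g = 1 := by
      have := HopfAlgebra.mul_antipode_rTensor_comul_apply (R := k) (a := ι g)
      rw [hgl₁, hgl₂] at this
      simpa using this
    calc HopfAlgebra.antipode (R := k) (A := H) (ι g)
        = HopfAlgebra.antipode (R := k) (A := H) (ι g) * (ι g * ι g⁻¹) := by
          rw [← map_mul, mul_inv_cancel, map_one, mul_one]
      _ = (HopfAlgebra.antipode (R := k) (A := H) (ι g) * ι g) * ι g⁻¹ := by
          rw [mul_assoc]
      _ = ι g⁻¹ := by rw [h1, one_mul]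
  have hSinv : ∀ g : G, antipodeInv k H hS (ι g) = ι g⁻¹ := by
    intro g
    have h2 : (LinearEquiv.ofBijective _ hS) (ι g⁻¹) = ι g := by
      rw [LinearEquiv.ofBijective_apply, hSg g⁻¹, inv_inv]
    rw [antipodeInv, ← h2]
    exact (LinearEquiv.ofBijective _ hS).symm_apply_apply _
  have htw : ∀ g : G, twist k H hS (τH : H →ₗ[k] H) (ι g) = ι (τ g) := by
    intro g
    simp [twist, hτH, hSinv]
  set T : H →ₗ[k] H := twist k H hS (τH : H →ₗ[k] H) with hT
  have htwpow : ∀ (m : ℕ) (g : G), (T ^ m) (ι g) = ι ((⇑τ)^[m] g) := by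
    intro m
    induction m with
    | zero => intro g; simp
    | succ m ih =>
        intro g
        rw [pow_succ, Module.End.mul_apply, htw, ih, ← Function.iterate_succ_apply,
          Function.iterate_succ_apply']
  have hconvOne : ∀ g : G, convOne k H (ι g) = 1 := by
    intro g; simp [convOne, hgl₂]
  have hgamma : ∀ (m : ℕ) (g : G), gamma k H T m (ι g) = ι (normG (⇑τ) m g) := by
    intro m
    induction m with
    | zero => intro g; simp [gamma, hconvOne, normG]
    | succ m ih =>
        intro g
        have : normG (⇑τ) (m + 1) g = normG (⇑τ) m g * (⇑τ)^[m] g := by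
          simp [normG, List.range_succ]
        rw [this, map_mul]
        simp only [gamma, conv, LinearMap.coe_comp, Function.comp_apply, hgl₁,
          TensorProduct.map_tmul, LinearMap.mul'_apply, ih, htwpow]
  intro n hn
  constructor
  · intro hEq g
    have h1 : gamma k H T (n * r) (ι g) = convOne k H (ι g) := by rw [hEq]
    rw [hgamma, hconvOne, normG_mul_left (⇑τ) r hr.2.1 n g] at h1
    have : ι (normG (⇑τ) r g ^ n) = ι 1 := by simpa using h1
    exact hinj this
  · intro hN
    apply b.ext
    intro g
    rw [hb, hgamma, hconvOne, normG_mul_left (⇑τ) r hr.2.1 n g, hN g, map_one]
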